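/- Let 0 < p_0 < p_1 < 1. Then the chain of strict inequalities p_1/p_0 < log(1 − p_1)/log(1 − p_0) < (p_1/(1 − p_1))/(p_0/(1 − p_0)) holds; that is, RR < CLR < OR, so the complementary log ratio lies strictly between the risk ratio and the odds ratio. -/

import Mathlib

open Real Set

private lemma hasDerivF (x : ℝ) (hx : x ∈ Ioo (0:ℝ) 1) :
    HasDerivAt (fun p => -Real.log (1 - p) / p)
      ((x/(1-x) + Real.log (1-x)) / x^2) x := by
  obtain ⟨hx0, hx1⟩ := hx
  have h1x : (1:ℝ) - x ≠ 0 := by linarith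
  have hlog : HasDerivAt (fun p : ℝ => Real.log (1 - p)) (-1/(1-x)) x := by
    have : HasDerivAt (fun p : ℝ => 1 - p) (-1) x := by
      simpa using (hasDerivAt_id x).const_sub 1
    simpa using this.log h1x
  have hdiv := hlog.neg.div (hasDerivAt_id x) (ne_of_gt hx0)
  change HasDerivAt (fun p => -Real.log (1 - p) / p) ((-(-1/(1-x)) * x - (-Real.log (1-x)) * 1) / x^2) x at hdiv
  convert hdiv using 1
  field_simp
  ring

private lemma hasDerivG (x : ℝ) (hx : x ∈ Ioo (0:ℝ) 1) :
    HasDerivAt (fun p => (1 - p) * Real.log (1 - p) / p)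
      ((-x - Real.log (1-x)) / x^2) x := by
  obtain ⟨hx0, hx1⟩ := hx
  have h1x : (1:ℝ) - x ≠ 0 := by linarith
  have hsub : HasDerivAt (fun p : ℝ => 1 - p) (-1) x := by
    simpa using (hasDerivAt_id x).const_sub 1
  have hlog : HasDerivAt (fun p : ℝ => Real.log (1 - p)) (-1/(1-x)) x := by
    simpa using hsub.log h1x
  have hnum : HasDerivAt (fun p : ℝ => (1 - p) * Real.log (1 - p))
      ((-1) * Real.log (1-x) + (1-x) * (-1/(1-x))) x := hsub.mul hlog
  have hdiv : HasDerivAt (fun p : ℝ => (1 - p) * Real.log (1 - p) / p)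
      ((((-1) * Real.log (1-x) + (1-x) * (-1/(1-x))) * x
        - (1-x) * Real.log (1-x) * 1) / x^2) x :=
    hnum.div (hasDerivAt_id x) (ne_of_gt hx0)
  convert hdiv using 1
  field_simp
  ring

private lemma Fmono : StrictMonoOn (fun p => -Real.log (1 - p) / p) (Ioo (0:ℝ) 1) := by
  apply strictMonoOn_of_deriv_pos (convex_Ioo 0 1)
  · exact fun x hx => (hasDerivF x hx).continuousAt.continuousWithinAt
  · intro x hx
    rw [interior_Ioo] at hx
    rw [(hasDerivF x hx).deriv]
    obtain ⟨hx0, hx1⟩ := hx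
    have h1x : (0:ℝ) < 1 - x := by linarith
    have hkey : Real.log (1-x)⁻¹ < (1-x)⁻¹ - 1 :=
      Real.log_lt_sub_one_of_pos (by positivity) (by
        intro h
        have : (1:ℝ) - x = 1 := by
          field_simp at h; linarith
        linarith)
    rw [Real.log_inv] at hkey
    have : 0 < x/(1-x) + Real.log (1-x) := by
      have hxx : x/(1-x) = (1-x)⁻¹ - 1 := by field_simp; ring
      linarith [hxx ▸ hkey]
    positivity

private lemma Gmono : StrictMonoOn (fun p => (1 - p) * Real.log (1 - p) / p) (Ioo (0:ℝ) 1) := by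
  apply strictMonoOn_of_deriv_pos (convex_Ioo 0 1)
  · exact fun x hx => (hasDerivG x hx).continuousAt.continuousWithinAt
  · intro x hx
    rw [interior_Ioo] at hx
    rw [(hasDerivG x hx).deriv]
    obtain ⟨hx0, hx1⟩ := hx
    have h1x : (0:ℝ) < 1 - x := by linarith
    have hkey : Real.log (1-x) < (1-x) - 1 :=
      Real.log_lt_sub_one_of_pos h1x (by intro h; linarith)
    have : 0 < -x - Real.log (1-x) := by linarith
    positivity

/-- For `0 < p₀ < p₁ < 1`: `RR < CLR < OR`, i.e. the complementary log ratio lies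
strictly between the risk ratio and the odds ratio. -/
theorem RR_lt_CLR_lt_OR (p₀ p₁ : ℝ) (h0 : 0 < p₀) (h01 : p₀ < p₁) (h1 : p₁ < 1) :
    p₁ / p₀ < Real.log (1 - p₁) / Real.log (1 - p₀) ∧
    Real.log (1 - p₁) / Real.log (1 - p₀) < (p₁ / (1 - p₁)) / (p₀ / (1 - p₀)) := by
  have hp1 : 0 < p₁ := lt_trans h0 h01
  have h10 : p₀ < 1 := lt_trans h01 h1
  have h1p0 : (0:ℝ) < 1 - p₀ := by linarith
  have h1p1 : (0:ℝ) < 1 - p₁ := by linarith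
  have hL0 : Real.log (1 - p₀) < 0 := Real.log_neg h1p0 (by linarith)
  have hL1 : Real.log (1 - p₁) < 0 := Real.log_neg h1p1 (by linarith)
  set L0 := Real.log (1 - p₀) with hL0def
  set L1 := Real.log (1 - p₁) with hL1def
  have hm0 : p₀ ∈ Ioo (0:ℝ) 1 := ⟨h0, h10⟩
  have hm1 : p₁ ∈ Ioo (0:ℝ) 1 := ⟨hp1, h1⟩
  have hF := Fmono hm0 hm1 h01
  have hG := Gmono hm0 hm1 h01
  simp only at hF hG
  constructor
  · rw [show L1 / L0 = (-L1) / (-L0) by rw [neg_div_neg_eq],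
      div_lt_div_iff₀ h0 (by linarith : (0:ℝ) < -L0)]
    rw [div_lt_div_iff₀ h0 hp1] at hF
    nlinarith [hF]
  · have hrhs : (p₁ / (1 - p₁)) / (p₀ / (1 - p₀)) = (p₁ * (1 - p₀)) / (p₀ * (1 - p₁)) := by
      field_simp
    rw [hrhs, show L1 / L0 = (-L1) / (-L0) by rw [neg_div_neg_eq],
      div_lt_div_iff₀ (by linarith : (0:ℝ) < -L0) (by positivity)]
    rw [div_lt_div_iff₀ h0 hp1] at hG
    nlinarith [hG]
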